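/- Let f, g ∈ ℂ[x₀,x₁,x₂] be homogeneous polynomials of degrees m ≥ 1 and n ≥ 1 respectively. Then f and g have a common nontrivial zero: there exists v ∈ ℂ³ with v ≠ 0, f(v) = 0 and g(v) = 0. In particular, any two plane curves in ℂP² intersect; e.g. two conics meet, and a line meets a conic. -/

import Mathlib

open MvPolynomial

noncomputable section Aux7

/-- degree-`e` multi-indices on `Fin 3` correspond to multisets of size `e`. -/
def aux7_degEquiv (e : ℕ) : {d : Fin 3 →₀ ℕ | d.degree = e} ≃ Sym (Fin 3) e where
  toFun u := ⟨Finsupp.toMultiset u.1, by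
    rw [Finsupp.card_toMultiset]; exact u.2⟩
  invFun s := ⟨Multiset.toFinsupp s.1, by
    show Finsupp.degree _ = e
    rw [show Finsupp.degree (Multiset.toFinsupp s.1) =
      (Finsupp.toMultiset (Multiset.toFinsupp s.1)).card by
        rw [Finsupp.card_toMultiset]; rfl]
    rw [Multiset.toFinsupp_toMultiset]; exact s.2⟩
  left_inv u := by ext1; simp
  right_inv s := by ext1; simp

instance aux7_fintype (e : ℕ) : Fintype {d : Fin 3 →₀ ℕ | d.degree = e} :=
  Fintype.ofEquiv _ (aux7_degEquiv e).symm

lemma aux7_card (e : ℕ) :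
    Fintype.card {d : Fin 3 →₀ ℕ | d.degree = e} = (e + 2).choose 2 := by
  rw [Fintype.card_congr (aux7_degEquiv e), Sym.card_sym_eq_choose]
  have h1 : Fintype.card (Fin 3) + e - 1 = e + 2 := by simp; omega
  have h2 := Nat.choose_symm (by omega : 2 ≤ e + 2)
  rw [show e + 2 - 2 = e by omega] at h2
  rw [h1, h2]

end Aux7
noncomputable section Aux7b
open Module

lemma aux7_submodule_eq (e : ℕ) :
    homogeneousSubmodule (Fin 3) ℂ e =
      restrictSupport ℂ {d : Fin 3 →₀ ℕ | d.degree = e} :=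
  homogeneousSubmodule_eq_finsupp_supported (Fin 3) ℂ e

noncomputable def aux7_basis (e : ℕ) :
    Basis {d : Fin 3 →₀ ℕ | d.degree = e} ℂ (homogeneousSubmodule (Fin 3) ℂ e) :=
  (aux7_submodule_eq e) ▸ basisRestrictSupport ℂ _

instance aux7_fd (e : ℕ) : FiniteDimensional ℂ (homogeneousSubmodule (Fin 3) ℂ e) :=
  Module.Finite.of_basis (aux7_basis e)

lemma aux7_finrank (e : ℕ) :
    finrank ℂ (homogeneousSubmodule (Fin 3) ℂ e) = (e + 2).choose 2 := by
  rw [finrank_eq_card_basis (aux7_basis e), aux7_card]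

end Aux7b
section Aux7c

lemma aux7_hc_mul {σ : Type*} (a f : MvPolynomial σ ℂ) {m d : ℕ}
    (hf : f.IsHomogeneous m) (hmd : m ≤ d) :
    homogeneousComponent d (a * f) = homogeneousComponent (d - m) a * f := by
  conv_lhs => rw [← sum_homogeneousComponent a]
  rw [Finset.sum_mul, map_sum]
  have key : ∀ i : ℕ, homogeneousComponent d (homogeneousComponent i a * f)
      = if i = d - m then homogeneousComponent i a * f else 0 := by
    intro i
    have hmem : homogeneousComponent i a * f ∈ homogeneousSubmodule σ ℂ (i + m) :=
      ((homogeneousComponent_isHomogeneous i a).mul hf)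
    rw [homogeneousComponent_of_mem hmem]
    congr 1
    simp only [eq_iff_iff]
    omega
  simp only [key]
  rw [Finset.sum_ite_eq' (Finset.range (a.totalDegree + 1)) (d - m)
    (fun i => homogeneousComponent i a * f)]
  split_ifs with h
  · rfl
  · rw [homogeneousComponent_eq_zero, zero_mul]
    simp only [Finset.mem_range] at h
    omega

end Aux7c
section Aux7d
open Module

lemma aux7_choose (e : ℕ) : (e + 2).choose 2 * 2 = (e + 2) * (e + 1) := by
  rw [Nat.choose_two_right]
  have h : 2 ∣ (e + 2) * (e + 2 - 1) := by
    rcases Nat.even_or_odd e with ⟨t, rfl⟩ | ⟨t, rfl⟩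
    · exact Dvd.dvd.mul_right ⟨t + 1, by omega⟩ _
    · exact Dvd.dvd.mul_left ⟨t + 1, by omega⟩ _
  rw [Nat.div_mul_cancel h]
  rfl

lemma aux7_arith (m n k : ℕ) (hm : 1 ≤ m) (hn : 1 ≤ n) :
    (n + k + 2).choose 2 + (m + k + 2).choose 2
      < (m + n + k + 2).choose 2 + (k + 2).choose 2 := by
  have h1 := aux7_choose (n + k)
  have h2 := aux7_choose (m + k)
  have h3 := aux7_choose (m + n + k)
  have h4 := aux7_choose k
  nlinarith [h1, h2, h3, h4, Nat.one_le_iff_ne_zero.mp hm, hm, hn,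
    mul_le_mul hm hn (Nat.zero_le 1) (Nat.zero_le m)]

end Aux7d
section Aux7e
open Module

lemma aux7_count (f g : MvPolynomial (Fin 3) ℂ) (m n k : ℕ) (hm : 1 ≤ m) (hn : 1 ≤ n)
    (hf : f.IsHomogeneous m) (hg : g.IsHomogeneous n) (hfg : f ≠ 0 ∨ g ≠ 0)
    (hsub : ∀ p ∈ homogeneousSubmodule (Fin 3) ℂ (m + n + k), p ∈ Ideal.span {f, g}) :
    False := by
  -- the multiplication map Φ : S_{n+k} × S_{m+k} → S_{m+n+k}
  set Snk := homogeneousSubmodule (Fin 3) ℂ (n + k) with hSnk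
  set Smk := homogeneousSubmodule (Fin 3) ℂ (m + k) with hSmk
  set Sd := homogeneousSubmodule (Fin 3) ℂ (m + n + k) with hSd
  set Sk := homogeneousSubmodule (Fin 3) ℂ k with hSk
  have memd : ∀ (a : Snk) (b : Smk), (a : MvPolynomial (Fin 3) ℂ) * f + (b : MvPolynomial (Fin 3) ℂ) * g ∈ Sd := by
    intro a b
    refine Submodule.add_mem _ ?_ ?_
    · have := ((mem_homogeneousSubmodule _ _).mp a.2).mul hf
      rwa [show n + k + m = m + n + k by ring] at this
    · have := ((mem_homogeneousSubmodule _ _).mp b.2).mul hg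
      rwa [show m + k + n = m + n + k by ring] at this
  let Φ : (Snk × Smk) →ₗ[ℂ] Sd :=
    { toFun := fun p => ⟨(p.1 : MvPolynomial (Fin 3) ℂ) * f + (p.2 : MvPolynomial (Fin 3) ℂ) * g,
        memd p.1 p.2⟩
      map_add' := fun p q => by
        apply Subtype.ext
        simp only [Prod.fst_add, Prod.snd_add, Submodule.coe_add]
        ring
      map_smul' := fun r p => by
        apply Subtype.ext
        simp only [Prod.smul_fst, Prod.smul_snd, SetLike.val_smul, RingHom.id_apply, smul_add,
          smul_mul_assoc] }
  have hsurj : Function.Surjective Φ := by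
    intro x
    obtain ⟨a, b, hab⟩ := Ideal.mem_span_pair.mp (hsub x.1 x.2)
    refine ⟨⟨⟨homogeneousComponent (n + k) a, homogeneousComponent_mem _ _⟩,
      ⟨homogeneousComponent (m + k) b, homogeneousComponent_mem _ _⟩⟩, ?_⟩
    apply Subtype.ext
    show homogeneousComponent (n + k) a * f + homogeneousComponent (m + k) b * g = (x : MvPolynomial (Fin 3) ℂ)
    have e1 : homogeneousComponent (m + n + k) (a * f) = homogeneousComponent (n + k) a * f := by
      rw [aux7_hc_mul a f hf (by omega), show m + n + k - m = n + k by omega]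
    have e2 : homogeneousComponent (m + n + k) (b * g) = homogeneousComponent (m + k) b * g := by
      rw [aux7_hc_mul b g hg (by omega), show m + n + k - n = m + k by omega]
    have e3 : homogeneousComponent (m + n + k) (x : MvPolynomial (Fin 3) ℂ) = x := by
      rw [homogeneousComponent_of_mem x.2, if_pos rfl]
    calc homogeneousComponent (n + k) a * f + homogeneousComponent (m + k) b * g
        = homogeneousComponent (m + n + k) (a * f + b * g) := by rw [map_add, e1, e2]
      _ = (x : MvPolynomial (Fin 3) ℂ) := by rw [hab, e3]
  -- the syzygy map Ψ : S_k → ker Φ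
  have memnk : ∀ c : Sk, (c : MvPolynomial (Fin 3) ℂ) * g ∈ Snk := by
    intro c
    have := ((mem_homogeneousSubmodule _ _).mp c.2).mul hg
    rwa [show k + n = n + k by ring] at this
  have memmk : ∀ c : Sk, -((c : MvPolynomial (Fin 3) ℂ) * f) ∈ Smk := by
    intro c
    refine Submodule.neg_mem _ ?_
    have := ((mem_homogeneousSubmodule _ _).mp c.2).mul hf
    rwa [show k + m = m + k by ring] at this
  let Ψ : Sk →ₗ[ℂ] (Snk × Smk) :=
    { toFun := fun c => (⟨(c : MvPolynomial (Fin 3) ℂ) * g, memnk c⟩,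
        ⟨-((c : MvPolynomial (Fin 3) ℂ) * f), memmk c⟩)
      map_add' := fun c c' => by
        refine Prod.ext (Subtype.ext ?_) (Subtype.ext ?_) <;>
          simp only [Prod.fst_add, Prod.snd_add, Submodule.coe_add] <;> ring
      map_smul' := fun r c => by
        refine Prod.ext (Subtype.ext ?_) (Subtype.ext ?_) <;>
          simp only [Prod.smul_fst, Prod.smul_snd, SetLike.val_smul, RingHom.id_apply,
            smul_mul_assoc, smul_neg] }
  have hker : ∀ c : Sk, Ψ c ∈ LinearMap.ker Φ := by
    intro c
    rw [LinearMap.mem_ker]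
    apply Subtype.ext
    show (c : MvPolynomial (Fin 3) ℂ) * g * f + -((c : MvPolynomial (Fin 3) ℂ) * f) * g = 0
    ring
  let Ψ' : Sk →ₗ[ℂ] LinearMap.ker Φ := (Ψ).codRestrict (LinearMap.ker Φ) hker
  have hinj : Function.Injective Ψ' := by
    intro c c' h
    have h2 : Ψ c = Ψ c' := congrArg Subtype.val h
    have h3 : (c : MvPolynomial (Fin 3) ℂ) * g = (c' : MvPolynomial (Fin 3) ℂ) * g :=
      congrArg (Subtype.val ∘ Prod.fst) h2
    have h4 : -((c : MvPolynomial (Fin 3) ℂ) * f) = -((c' : MvPolynomial (Fin 3) ℂ) * f) :=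
      congrArg (Subtype.val ∘ Prod.snd) h2
    apply Subtype.ext
    rcases hfg with hf0 | hg0
    · have h6 := neg_injective h4
      have h5 : ((c : MvPolynomial (Fin 3) ℂ) - c') * f = 0 := by linear_combination h6
      rcases mul_eq_zero.mp h5 with h7 | h7
      · linear_combination h7
      · exact absurd h7 hf0
    · have h5 : ((c : MvPolynomial (Fin 3) ℂ) - c') * g = 0 := by linear_combination h3
      rcases mul_eq_zero.mp h5 with h7 | h7
      · linear_combination h7
      · exact absurd h7 hg0
  -- rank counting
  have rank1 : finrank ℂ (Snk × Smk) = finrank ℂ (LinearMap.ker Φ) + finrank ℂ Sd := by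
    have := LinearMap.finrank_range_add_finrank_ker Φ
    rw [LinearMap.range_eq_top.mpr hsurj, finrank_top] at this
    omega
  have rank2 : finrank ℂ Sk ≤ finrank ℂ (LinearMap.ker Φ) :=
    LinearMap.finrank_le_finrank_of_injective hinj
  have rankprod : finrank ℂ (Snk × Smk) = finrank ℂ Snk + finrank ℂ Smk :=
    Module.finrank_prod
  rw [rankprod] at rank1
  have v1 : finrank ℂ Snk = (n + k + 2).choose 2 := aux7_finrank _
  have v2 : finrank ℂ Smk = (m + k + 2).choose 2 := aux7_finrank _
  have v3 : finrank ℂ Sd = (m + n + k + 2).choose 2 := aux7_finrank _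
  have v4 : finrank ℂ Sk = (k + 2).choose 2 := aux7_finrank _
  rw [v1, v2, v3] at rank1
  rw [v4] at rank2
  have := aux7_arith m n k hm hn
  omega

end Aux7e
section Aux7f

lemma aux7_mono_mem (f g : MvPolynomial (Fin 3) ℂ) (N : ℕ)
    (hXN : ∀ i : Fin 3, (X i : MvPolynomial (Fin 3) ℂ) ^ N ∈ Ideal.span {f, g})
    (u : Fin 3 →₀ ℕ) (c : ℂ) (hu : 3 * N ≤ u.degree) :
    (monomial u c : MvPolynomial (Fin 3) ℂ) ∈ Ideal.span {f, g} := by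
  -- some variable has exponent at least N
  have hdeg : u.degree ≤ u 0 + u 1 + u 2 := by
    have h1 : u.degree = ∑ i ∈ u.support, u i := rfl
    have h2 : ∑ i ∈ u.support, u i ≤ ∑ i : Fin 3, u i :=
      Finset.sum_le_sum_of_subset (Finset.subset_univ _)
    rw [h1]
    calc ∑ i ∈ u.support, u i ≤ ∑ i : Fin 3, u i := h2
      _ = u 0 + u 1 + u 2 := by rw [Fin.sum_univ_three]
  have : ∃ i : Fin 3, N ≤ u i := by
    by_contra hcon
    push_neg at hcon
    have := hcon 0
    have := hcon 1
    have := hcon 2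
    omega
  obtain ⟨i, hi⟩ := this
  have key : (monomial u c : MvPolynomial (Fin 3) ℂ)
      = monomial (u - Finsupp.single i N) c * X i ^ N := by
    have huu : u - Finsupp.single i N + Finsupp.single i N = u := by
      ext j
      rcases eq_or_ne j i with rfl | hj
      · simp only [Finsupp.add_apply, Finsupp.tsub_apply, Finsupp.single_eq_same]
        omega
      · simp only [Finsupp.add_apply, Finsupp.tsub_apply, Finsupp.single_eq_of_ne' (Ne.symm hj)]
        omega
    rw [X_pow_eq_monomial, monomial_mul, mul_one, huu]
  rw [key]
  exact Ideal.mul_mem_left _ _ (hXN i)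

end Aux7f

/-- Two plane curves in `ℂP²` always intersect: homogeneous polynomials
`f, g ∈ ℂ[x₀,x₁,x₂]` of positive degrees have a common nontrivial zero. -/
theorem stmt7 (f g : MvPolynomial (Fin 3) ℂ) (m n : ℕ) (hm : 1 ≤ m) (hn : 1 ≤ n)
    (hf : f ∈ MvPolynomial.homogeneousSubmodule (Fin 3) ℂ m)
    (hg : g ∈ MvPolynomial.homogeneousSubmodule (Fin 3) ℂ n) :
    ∃ v : Fin 3 → ℂ, v ≠ 0 ∧ MvPolynomial.eval v f = 0 ∧ MvPolynomial.eval v g = 0 := by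
  by_contra hcon
  push_neg at hcon
  set I : Ideal (MvPolynomial (Fin 3) ℂ) := Ideal.span {f, g} with hI
  have hfI : f ∈ I := Ideal.subset_span (by simp)
  have hgI : g ∈ I := Ideal.subset_span (by simp)
  -- the common zero locus of f and g is contained in {0}
  have hzl : ∀ x ∈ MvPolynomial.zeroLocus ℂ I, x = 0 := by
    intro x hx
    by_contra hx0
    exact (hcon x hx0 (hx f hfI)) (hx g hgI)
  -- by the Nullstellensatz, every variable has a power lying in I
  have hXrad : ∀ i : Fin 3, (X i : MvPolynomial (Fin 3) ℂ) ∈ I.radical := by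
    intro i
    rw [← MvPolynomial.vanishingIdeal_zeroLocus_eq_radical (K := ℂ)]
    intro x hx
    rw [hzl x hx]
    simp
  choose Nf hNf using fun i => Ideal.mem_radical_iff.mp (hXrad i)
  set N : ℕ := (Nf 0) + (Nf 1) + (Nf 2) with hN
  have hXN : ∀ i : Fin 3, (X i : MvPolynomial (Fin 3) ℂ) ^ N ∈ I := by
    intro i
    have hle : Nf i ≤ N := by
      fin_cases i <;> simp [hN] <;> omega
    have heq : (X i : MvPolynomial (Fin 3) ℂ) ^ N = X i ^ (N - Nf i) * X i ^ Nf i := by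
      rw [← pow_add]
      congr 1
      omega
    rw [heq]
    exact Ideal.mul_mem_left _ _ (hNf i)
  -- every homogeneous polynomial of degree m + n + 3N lies in I
  have hsub : ∀ p ∈ homogeneousSubmodule (Fin 3) ℂ (m + n + 3 * N), p ∈ I := by
    intro p hp
    rw [(p : MvPolynomial (Fin 3) ℂ).as_sum]
    refine Ideal.sum_mem _ fun u hu => ?_
    have hcu : coeff u p ≠ 0 := mem_support_iff.mp hu
    have hud : u.degree = m + n + 3 * N := by
      have := ((mem_homogeneousSubmodule _ _).mp hp) hcu
      rwa [show (1 : Fin 3 → ℕ) = fun _ => 1 from rfl, ← Finsupp.degree_eq_weight_one] at this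
    exact aux7_mono_mem f g N hXN u _ (by omega)
  -- rule out f = g = 0
  by_cases hfg : f = 0 ∧ g = 0
  · obtain ⟨hf0, hg0⟩ := hfg
    have h0 : (X 0 : MvPolynomial (Fin 3) ℂ) ^ N ∈ I := hXN 0
    rw [hI, hf0, hg0] at h0
    obtain ⟨a, b, hab⟩ := Ideal.mem_span_pair.mp h0
    simp only [mul_zero, add_zero] at hab
    have : (X 0 : MvPolynomial (Fin 3) ℂ) ^ N ≠ 0 := by
      rw [X_pow_eq_monomial]
      simp [monomial_eq_zero]
    exact this hab.symm
  · have hfg' : f ≠ 0 ∨ g ≠ 0 := by tauto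
    exact aux7_count f g m n (3 * N) hm hn
      ((mem_homogeneousSubmodule _ _).mp hf) ((mem_homogeneousSubmodule _ _).mp hg)
      hfg' hsub
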